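/- Let γ : ℤ → ℝ be even (γ(−h) = γ(h)) with ∑_{h=0}^{∞} (1 + h³)·|γ(h)| < ∞, and set Ω = ∑_{h∈ℤ} γ(h). Let K = K(T) be a sequence of positive integers with K(T) → ∞ and K(T)/T → 0. Then (1/T)·∑_{t=1}^{T}∑_{s=1}^{T} [ (1/K)·∑_{ℓ=1}^{K} cos(2πℓ(t−s)/T) ]·γ(t−s) → Ω as T → ∞. -/

import Mathlib

open Filter

private lemma card_fiber_eq (T : ℕ) (h : ℤ) :
    ((Finset.Icc 1 T ×ˢ Finset.Icc 1 T).filter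
      (fun p : ℕ × ℕ => (p.1 : ℤ) - (p.2 : ℤ) = h)).card = T - h.natAbs := by
  have : ((Finset.Icc 1 T ×ˢ Finset.Icc 1 T).filter
      (fun p : ℕ × ℕ => (p.1 : ℤ) - (p.2 : ℤ) = h)).card
      = (Finset.Icc 1 (T - h.natAbs)).card := by
    apply Finset.card_nbij' (fun p => p.1 - h.toNat)
      (fun s => (s + h.toNat, s + (-h).toNat))
    · intro p hp
      simp only [Finset.mem_coe, Finset.mem_filter, Finset.mem_product, Finset.mem_Icc] at hp
      obtain ⟨⟨⟨h1, h2⟩, h3, h4⟩, h5⟩ := hp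
      rw [Finset.mem_coe, Finset.mem_Icc]
      dsimp only
      omega
    · intro s hs
      rw [Finset.mem_coe, Finset.mem_Icc] at hs
      simp only [Finset.mem_coe, Finset.mem_filter, Finset.mem_product, Finset.mem_Icc]
      push_cast
      omega
    · intro p hp
      simp only [Finset.mem_coe, Finset.mem_filter, Finset.mem_product, Finset.mem_Icc] at hp
      obtain ⟨⟨⟨h1, h2⟩, h3, h4⟩, h5⟩ := hp
      have : p.1 - h.toNat + h.toNat = p.1 := by omega
      have h2' : p.1 - h.toNat + (-h).toNat = p.2 := by omega
      rw [Prod.ext_iff]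
      exact ⟨this, h2'⟩
    · intro s hs
      rw [Finset.mem_coe, Finset.mem_Icc] at hs
      dsimp only
      omega
  rw [this, Nat.card_Icc]
  omega

private lemma double_sum_eq (T : ℕ) (G : ℤ → ℝ) :
    (∑ t ∈ Finset.Icc 1 T, ∑ s ∈ Finset.Icc 1 T, G ((t : ℤ) - (s : ℤ)))
      = ∑ h ∈ Finset.Icc (1 - (T : ℤ)) ((T : ℤ) - 1),
          ((T - h.natAbs : ℕ) : ℝ) * G h := by
  rw [← Finset.sum_product']
  have hmaps : ∀ p ∈ Finset.Icc 1 T ×ˢ Finset.Icc 1 T,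
      (p.1 : ℤ) - (p.2 : ℤ) ∈ Finset.Icc (1 - (T : ℤ)) ((T : ℤ) - 1) := by
    intro p hp
    simp only [Finset.mem_product, Finset.mem_Icc] at hp ⊢
    omega
  rw [← Finset.sum_fiberwise_of_maps_to hmaps (fun p => G ((p.1 : ℤ) - (p.2 : ℤ)))]
  refine Finset.sum_congr rfl (fun h hh => ?_)
  have : ∑ p ∈ (Finset.Icc 1 T ×ˢ Finset.Icc 1 T).filter
      (fun p : ℕ × ℕ => (p.1 : ℤ) - (p.2 : ℤ) = h), G ((p.1 : ℤ) - (p.2 : ℤ))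
      = ∑ p ∈ (Finset.Icc 1 T ×ˢ Finset.Icc 1 T).filter
      (fun p : ℕ × ℕ => (p.1 : ℤ) - (p.2 : ℤ) = h), G h := by
    refine Finset.sum_congr rfl (fun p hp => ?_)
    rw [Finset.mem_filter] at hp
    rw [hp.2]
  rw [this, Finset.sum_const, card_fiber_eq, nsmul_eq_mul]

/-- Deterministic asymptotic unbiasedness of the SHAR-WB long-run variance kernel: if
`γ : ℤ → ℝ` is even with `∑_{h=0}^{∞} (1 + h³)·|γ(h)| < ∞`, `Ω = ∑_{h∈ℤ} γ(h)`, and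
`K(T)` are positive integers with `K(T) → ∞` and `K(T)/T → 0`, then
`(1/T)·∑_{t=1}^{T}∑_{s=1}^{T} [(1/K)·∑_{ℓ=1}^{K} cos(2πℓ(t−s)/T)]·γ(t−s) → Ω`. -/
theorem shar_wb_kernel_weighted_autocov_tendsto_lrv
    (γ : ℤ → ℝ) (heven : ∀ h : ℤ, γ (-h) = γ h)
    (hsum : Summable (fun h : ℕ => (1 + (h : ℝ) ^ 3) * |γ (h : ℤ)|))
    (Ωlrv : ℝ) (hΩ : Ωlrv = ∑' h : ℤ, γ h)
    (K : ℕ → ℕ) (hKpos : ∀ T, 0 < K T)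
    (hKinf : Tendsto (fun T : ℕ => (K T : ℝ)) atTop atTop)
    (hKT : Tendsto (fun T : ℕ => (K T : ℝ) / T) atTop (nhds 0)) :
    Tendsto (fun T : ℕ =>
        (1 / (T : ℝ)) * ∑ t ∈ Finset.Icc 1 T, ∑ s ∈ Finset.Icc 1 T,
          ((1 / (K T : ℝ)) * ∑ ℓ ∈ Finset.Icc 1 (K T),
            Real.cos (2 * Real.pi * ℓ * ((t : ℝ) - (s : ℝ)) / T)) * γ ((t : ℤ) - (s : ℤ)))
      atTop (nhds Ωlrv) := by
  classical
  -- the weight function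
  set W : ℕ → ℤ → ℝ := fun T h =>
    (1 / (K T : ℝ)) * ∑ ℓ ∈ Finset.Icc 1 (K T),
      Real.cos (2 * Real.pi * ℓ * ((h : ℤ) : ℝ) / T) with hW
  set F : ℕ → ℤ → ℝ := fun T h =>
    (((T - h.natAbs : ℕ) : ℝ) / T) * W T h * γ h with hF
  -- Step 1: rewrite the statement's function as a tsum of F
  have key : ∀ T : ℕ,
      (1 / (T : ℝ)) * ∑ t ∈ Finset.Icc 1 T, ∑ s ∈ Finset.Icc 1 T,
          ((1 / (K T : ℝ)) * ∑ ℓ ∈ Finset.Icc 1 (K T),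
            Real.cos (2 * Real.pi * ℓ * ((t : ℝ) - (s : ℝ)) / T)) * γ ((t : ℤ) - (s : ℤ))
        = ∑' h : ℤ, F T h := by
    intro T
    have e1 : (∑ t ∈ Finset.Icc 1 T, ∑ s ∈ Finset.Icc 1 T,
          ((1 / (K T : ℝ)) * ∑ ℓ ∈ Finset.Icc 1 (K T),
            Real.cos (2 * Real.pi * ℓ * ((t : ℝ) - (s : ℝ)) / T)) * γ ((t : ℤ) - (s : ℤ)))
        = ∑ t ∈ Finset.Icc 1 T, ∑ s ∈ Finset.Icc 1 T,
            (fun h : ℤ => W T h * γ h) ((t : ℤ) - (s : ℤ)) := by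
      refine Finset.sum_congr rfl (fun t _ => Finset.sum_congr rfl (fun s _ => ?_))
      simp only [hW, Int.cast_sub, Int.cast_natCast]
    rw [e1, double_sum_eq T (fun h : ℤ => W T h * γ h), Finset.mul_sum]
    rw [tsum_eq_sum (s := Finset.Icc (1 - (T : ℤ)) ((T : ℤ) - 1))]
    · refine Finset.sum_congr rfl (fun h _ => ?_)
      simp only [hF]
      ring
    · intro h hh
      rw [Finset.mem_Icc] at hh
      have : (T - h.natAbs : ℕ) = 0 := by omega
      simp [hF, this]
  -- Step 2: summability of the bound
  have habs : Summable (fun n : ℕ => |γ (n : ℤ)|) := by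
    refine Summable.of_nonneg_of_le (fun n => abs_nonneg _) (fun n => ?_) hsum
    have h1 : (1 : ℝ) ≤ 1 + (n : ℝ) ^ 3 := by
      have := pow_nonneg (Nat.cast_nonneg (α := ℝ) n) 3
      linarith
    nlinarith [abs_nonneg (γ (n : ℤ))]
  have hboundsum : Summable (fun h : ℤ => |γ h|) := by
    exact Summable.of_nat_of_neg (f := fun h : ℤ => |γ h|) habs (by simpa [heven] using habs)
  -- Step 3: dominated convergence
  have hmain : Tendsto (fun T : ℕ => ∑' h : ℤ, F T h) atTop (nhds (∑' h : ℤ, γ h)) := by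
    apply tendsto_tsum_of_dominated_convergence hboundsum
    · -- pointwise convergence
      intro h
      have hA : Tendsto (fun T : ℕ => ((T - h.natAbs : ℕ) : ℝ) / T) atTop (nhds 1) := by
        have hev : ∀ᶠ T : ℕ in atTop,
            1 - (h.natAbs : ℝ) / T = ((T - h.natAbs : ℕ) : ℝ) / T := by
          filter_upwards [eventually_ge_atTop (h.natAbs + 1)] with T hT
          have hT0 : (T : ℝ) ≠ 0 := Nat.cast_ne_zero.mpr (by omega)
          rw [Nat.cast_sub (by omega), sub_div, div_self hT0]
        have : Tendsto (fun T : ℕ => 1 - (h.natAbs : ℝ) / T) atTop (nhds (1 - 0)) :=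
          tendsto_const_nhds.sub (tendsto_const_div_atTop_nhds_zero_nat _)
        rw [sub_zero] at this
        exact this.congr' hev
      have hWlim : Tendsto (fun T : ℕ => W T h) atTop (nhds 1) := by
        have hD : Tendsto (fun T : ℕ => W T h - 1) atTop (nhds 0) := by
          apply squeeze_zero_norm'
            (a := fun T : ℕ => 2 * Real.pi ^ 2 * ((h : ℤ) : ℝ) ^ 2 * ((K T : ℝ) / T) ^ 2)
          · filter_upwards [eventually_ge_atTop 1] with T hT
            have hK0 : (0 : ℝ) < (K T : ℝ) := by exact_mod_cast hKpos T
            have hcard : (Finset.Icc 1 (K T)).card = K T := by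
              rw [Nat.card_Icc]; omega
            have e2 : W T h - 1 = (1 / (K T : ℝ)) *
                ∑ ℓ ∈ Finset.Icc 1 (K T),
                  (Real.cos (2 * Real.pi * ℓ * ((h : ℤ) : ℝ) / T) - 1) := by
              rw [Finset.sum_sub_distrib, Finset.sum_const, hcard, hW]
              field_simp
              rw [nsmul_eq_mul, mul_one]
              congr 1
              refine Finset.sum_congr rfl (fun x _ => ?_)
              ring_nf
            rw [e2, Real.norm_eq_abs, abs_mul, abs_of_nonneg (by positivity :
                (0 : ℝ) ≤ 1 / (K T : ℝ))]
            have hterm : ∀ ℓ ∈ Finset.Icc 1 (K T),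
                |Real.cos (2 * Real.pi * ℓ * ((h : ℤ) : ℝ) / T) - 1|
                  ≤ 2 * Real.pi ^ 2 * ((h : ℤ) : ℝ) ^ 2 * ((K T : ℝ) / T) ^ 2 := by
              intro ℓ hℓ
              rw [Finset.mem_Icc] at hℓ
              set x : ℝ := 2 * Real.pi * ℓ * ((h : ℤ) : ℝ) / T with hx
              have h1 : Real.cos x - 1 ≤ 0 := sub_nonpos.mpr (Real.cos_le_one x)
              have h2 : |Real.cos x - 1| = 1 - Real.cos x := by
                rw [abs_of_nonpos h1]; ring
              have h3 : 1 - Real.cos x ≤ x ^ 2 / 2 := by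
                have := Real.one_sub_sq_div_two_le_cos (x := x)
                linarith
              have h4 : x ^ 2 / 2 ≤ 2 * Real.pi ^ 2 * ((h : ℤ) : ℝ) ^ 2 *
                  ((K T : ℝ) / T) ^ 2 := by
                have hT0 : (0 : ℝ) < (T : ℝ) := by exact_mod_cast hT
                have hℓK : (ℓ : ℝ) ≤ (K T : ℝ) := by exact_mod_cast hℓ.2
                have hℓ0 : (0 : ℝ) ≤ (ℓ : ℝ) := Nat.cast_nonneg _
                have e3 : x ^ 2 / 2 = 2 * Real.pi ^ 2 * ((h : ℤ) : ℝ) ^ 2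
                    * ((ℓ : ℝ) / T) ^ 2 := by
                  rw [hx]; field_simp
                rw [e3]
                gcongr
                all_goals first | positivity | exact hℓ0 | exact hℓK
              linarith [h2 ▸ (h3.trans h4)]
            calc (1 / (K T : ℝ)) * |∑ ℓ ∈ Finset.Icc 1 (K T),
                  (Real.cos (2 * Real.pi * ℓ * ((h : ℤ) : ℝ) / T) - 1)|
                ≤ (1 / (K T : ℝ)) * ∑ ℓ ∈ Finset.Icc 1 (K T),
                    |Real.cos (2 * Real.pi * ℓ * ((h : ℤ) : ℝ) / T) - 1| := by
                  gcongr
                  exact Finset.abs_sum_le_sum_abs _ _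
              _ ≤ (1 / (K T : ℝ)) * ∑ ℓ ∈ Finset.Icc 1 (K T),
                    (2 * Real.pi ^ 2 * ((h : ℤ) : ℝ) ^ 2 * ((K T : ℝ) / T) ^ 2) := by
                  gcongr with ℓ hℓ
                  exact hterm ℓ hℓ
              _ = 2 * Real.pi ^ 2 * ((h : ℤ) : ℝ) ^ 2 * ((K T : ℝ) / T) ^ 2 := by
                  rw [Finset.sum_const, hcard, nsmul_eq_mul]
                  field_simp
          · have : Tendsto (fun T : ℕ => 2 * Real.pi ^ 2 * ((h : ℤ) : ℝ) ^ 2 *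
                ((K T : ℝ) / T) ^ 2) atTop
                (nhds (2 * Real.pi ^ 2 * ((h : ℤ) : ℝ) ^ 2 * (0 : ℝ) ^ 2)) :=
              tendsto_const_nhds.mul (hKT.pow 2)
            simpa using this
        have := hD.add_const 1
        simpa using this
      have : Tendsto (fun T : ℕ => F T h) atTop (nhds ((1 * 1) * γ h)) :=
        (hA.mul hWlim).mul tendsto_const_nhds
      simpa using this
    · -- uniform bound
      filter_upwards with T
      intro h
      have hA0 : (0 : ℝ) ≤ ((T - h.natAbs : ℕ) : ℝ) / T := by positivity
      have hA1 : ((T - h.natAbs : ℕ) : ℝ) / T ≤ 1 := by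
        apply div_le_one_of_le₀
        · exact_mod_cast Nat.sub_le T h.natAbs
        · exact Nat.cast_nonneg T
      have hW1 : |W T h| ≤ 1 := by
        have hK0 : (0 : ℝ) < (K T : ℝ) := by exact_mod_cast hKpos T
        have hcard : (Finset.Icc 1 (K T)).card = K T := by
          rw [Nat.card_Icc]; omega
        rw [hW, abs_mul, abs_of_nonneg (by positivity : (0 : ℝ) ≤ 1 / (K T : ℝ))]
        have hsum1 : |∑ ℓ ∈ Finset.Icc 1 (K T),
            Real.cos (2 * Real.pi * ℓ * ((h : ℤ) : ℝ) / T)| ≤ (K T : ℝ) := by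
          calc |∑ ℓ ∈ Finset.Icc 1 (K T), Real.cos (2 * Real.pi * ℓ * ((h : ℤ) : ℝ) / T)|
              ≤ ∑ ℓ ∈ Finset.Icc 1 (K T), |Real.cos (2 * Real.pi * ℓ * ((h : ℤ) : ℝ) / T)| :=
                Finset.abs_sum_le_sum_abs _ _
            _ ≤ ∑ ℓ ∈ Finset.Icc 1 (K T), (1 : ℝ) := by
                gcongr with ℓ hℓ
                exact Real.abs_cos_le_one _
            _ = (K T : ℝ) := by rw [Finset.sum_const, hcard, nsmul_eq_mul, mul_one]
        calc (1 / (K T : ℝ)) * |∑ ℓ ∈ Finset.Icc 1 (K T),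
              Real.cos (2 * Real.pi * ℓ * ((h : ℤ) : ℝ) / T)|
            ≤ (1 / (K T : ℝ)) * (K T : ℝ) := by gcongr
          _ = 1 := by field_simp
      rw [hF]
      simp only [Real.norm_eq_abs]
      calc |((T - h.natAbs : ℕ) : ℝ) / T * W T h * γ h|
          = (((T - h.natAbs : ℕ) : ℝ) / T) * |W T h| * |γ h| := by
            rw [abs_mul, abs_mul, abs_of_nonneg hA0]
        _ ≤ 1 * 1 * |γ h| := by gcongr
        _ = |γ h| := by ring
  rw [hΩ]
  exact hmain.congr (fun T => (key T).symm)
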